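/- Let I' ⊆ ℝ be a nonempty open interval and let q : ℝ → ℝ be a Borel function whose restriction to I' is continuous and strictly increasing and is, on every compact subinterval of I', the difference of two convex functions (so that the right derivative q'_+(x) = lim_{h↘0} (q(x+h) − q(x))/h exists for every x ∈ I'). Let μ_q be the Borel measure on I' determined by μ_q((a,b]) = q(b) − q(a) for a ≤ b in I'. Then the set {x ∈ I' : q'_+(x) = 0} has Lebesgue measure zero if and only if Lebesgue measure restricted to I' is absolutely continuous with respect to μ_q. -/

import Mathlib

open MeasureTheory Set Filter Topology

/-- The intermediate equivalence `(b) ⇔ μ_L ≪ dq on s(J°)` from the proof of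
Theorem 2.7: for `q` continuous and strictly increasing on a nonempty open
interval `I`, a difference of two convex functions on every compact subinterval
of `I` with right derivative `qp`, and `μq` the Borel measure on `I` with
`μq((a,b]) = q b - q a` for `a ≤ b` in `I`, the set `{x ∈ I : qp x = 0}` is
Lebesgue-null if and only if Lebesgue measure restricted to `I` is absolutely
continuous with respect to `μq`. -/
theorem stmt_7 (I : Set ℝ) (hI_open : IsOpen I) (hI_ne : I.Nonempty)
    (hI_conn : I.OrdConnected)
    (q : ℝ → ℝ) (hq_meas : Measurable q)
    (hq_cont : ContinuousOn q I) (hq_mono : StrictMonoOn q I)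
    (hq_dc : ∀ a b : ℝ, a ∈ I → b ∈ I → a ≤ b → ∃ f g : ℝ → ℝ,
      ConvexOn ℝ (Set.Icc a b) f ∧ ConvexOn ℝ (Set.Icc a b) g ∧
      ∀ x ∈ Set.Icc a b, q x = f x - g x)
    (qp : ℝ → ℝ)
    (hqp : ∀ x ∈ I,
      Filter.Tendsto (fun h : ℝ => (q (x + h) - q x) / h) (𝓝[>] 0) (𝓝 (qp x)))
    (μq : Measure ℝ) (hμq_supp : μq Iᶜ = 0)
    (hμq : ∀ a b : ℝ, a ∈ I → b ∈ I → a ≤ b →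
      μq (Set.Ioc a b) = ENNReal.ofReal (q b - q a)) :
    volume {x ∈ I | qp x = 0} = 0 ↔ volume.restrict I ≪ μq := by
    classical
  have hIcc : ∀ {u v : ℝ}, u ∈ I → v ∈ I → Icc u v ⊆ I := fun hu hv => hI_conn.out hu hv
  -- nonnegativity of qp on I
  have hqp_nonneg : ∀ x ∈ I, 0 ≤ qp x := by
    intro x hx
    refine ge_of_tendsto (hqp x hx) ?_
    have hmem : ∀ᶠ h in 𝓝[>] (0:ℝ), x + h ∈ I := by
      have ht : Tendsto (fun h : ℝ => x + h) (𝓝[>] (0:ℝ)) (𝓝 x) := by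
        have h0 : Tendsto (fun h : ℝ => x + h) (𝓝 (0:ℝ)) (𝓝 (x + 0)) :=
          (continuous_const.add continuous_id).tendsto 0
        rw [add_zero] at h0
        exact h0.mono_left nhdsWithin_le_nhds
      exact ht (hI_open.mem_nhds hx)
    filter_upwards [hmem, self_mem_nhdsWithin] with h hmemI hpos
    exact div_nonneg (sub_nonneg.2 (hq_mono.monotoneOn hx hmemI (le_add_of_nonneg_right hpos.le)))
      (le_of_lt hpos)
  -- no atoms inside I
  have hatom : ∀ x ∈ I, μq {x} = 0 := by
    intro x hx
    refine le_antisymm ?_ zero_le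
    have hq_at : ContinuousAt q x := hq_cont.continuousAt (hI_open.mem_nhds hx)
    have T : Tendsto (fun a' : ℝ => ENNReal.ofReal (q x - q a')) (𝓝[<] x) (𝓝 0) := by
      have h1 : Tendsto (fun a' : ℝ => q x - q a') (𝓝[<] x) (𝓝 (q x - q x)) :=
        tendsto_const_nhds.sub (hq_at.tendsto.mono_left nhdsWithin_le_nhds)
      rw [sub_self] at h1
      simpa [Function.comp_def] using (ENNReal.continuous_ofReal.tendsto 0).comp h1
    refine ge_of_tendsto T ?_
    have hev : ∀ᶠ a' in 𝓝[<] x, a' ∈ I :=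
      eventually_nhdsWithin_of_eventually_nhds (hI_open.eventually_mem hx)
    filter_upwards [hev, self_mem_nhdsWithin] with a' haI hax
    rw [← hμq a' x haI hx (le_of_lt hax)]
    exact measure_mono (Set.singleton_subset_iff.2 (Set.mem_Ioc.2 ⟨hax, le_rfl⟩))
  -- finiteness of μq on compact subintervals
  have hfin : ∀ a b : ℝ, a ∈ I → b ∈ I → μq (Icc a b) < ⊤ := by
    intro a b ha hb
    rcases lt_or_ge b a with hba | hab
    · simp [Icc_eq_empty_of_lt hba]
    · obtain ⟨ε, εpos, hball⟩ := Metric.isOpen_iff.1 hI_open a ha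
      have haI' : a - ε/2 ∈ I := hball (by rw [Real.ball_eq_Ioo]; constructor <;> [skip; skip] <;> linarith
        )
      calc μq (Icc a b) ≤ μq (Ioc (a - ε/2) b) :=
            measure_mono (fun x hx => ⟨by linarith [hx.1], hx.2⟩)
        _ = ENNReal.ofReal (q b - q (a - ε/2)) := hμq _ _ haI' hb (by linarith)
        _ < ⊤ := ENNReal.ofReal_lt_top
  -- the key identification of the Radon–Nikodym derivative
  have key : ∀ a b : ℝ, a ∈ I → b ∈ I → a < b →
      (∀ᵐ x ∂(volume : Measure ℝ), x ∈ Ioo a b →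
        ((μq.restrict (Icc a b)).rnDeriv volume x) = ENNReal.ofReal (qp x)) := by
    intro a b ha hb hab
    haveI : IsFiniteMeasure (μq.restrict (Icc a b)) := by
      constructor
      rw [Measure.restrict_apply_univ]
      exact hfin a b ha hb
    filter_upwards [VitaliFamily.ae_tendsto_rnDeriv
      (IsUnifLocDoublingMeasure.vitaliFamily (volume : Measure ℝ) 1) (μq.restrict (Icc a b))]
      with x hx hxab
    have hxI : x ∈ I := hIcc ha hb (Ioo_subset_Icc_self hxab)
    have T1 : Tendsto (fun y => (μq.restrict (Icc a b)) (Icc x y) / volume (Icc x y)) (𝓝[>] x)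
        (𝓝 ((μq.restrict (Icc a b)).rnDeriv volume x)) :=
      hx.comp (Real.tendsto_Icc_vitaliFamily_right x)
    have hsub : Tendsto (fun y : ℝ => y - x) (𝓝[>] x) (𝓝[>] (0:ℝ)) := by
      rw [tendsto_nhdsWithin_iff]
      constructor
      · have h0 : Tendsto (fun y : ℝ => y - x) (𝓝 x) (𝓝 (x - x)) :=
          (continuous_id.sub continuous_const).tendsto x
        rw [sub_self] at h0
        exact h0.mono_left nhdsWithin_le_nhds
      · filter_upwards [self_mem_nhdsWithin] with y hy
        simpa [sub_pos] using hy
    have T2 : Tendsto (fun y => ENNReal.ofReal ((q y - q x)/(y - x))) (𝓝[>] x)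
        (𝓝 (ENNReal.ofReal (qp x))) := by
      refine (ENNReal.continuous_ofReal.tendsto _).comp ?_
      have h1 := (hqp x hxI).comp hsub
      exact h1.congr (fun y => by simp)
    have hev : (fun y => (μq.restrict (Icc a b)) (Icc x y) / volume (Icc x y))
        =ᶠ[𝓝[>] x] (fun y => ENNReal.ofReal ((q y - q x)/(y - x))) := by
      filter_upwards [Ioc_mem_nhdsGT_of_mem ⟨le_rfl, hxab.2⟩] with y hy
      have hyI : y ∈ I := hIcc hxI hb ⟨le_of_lt hy.1, hy.2⟩
      have hsub2 : Icc x y ⊆ Icc a b := Icc_subset_Icc (le_of_lt hxab.1) hy.2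
      have h1 : (μq.restrict (Icc a b)) (Icc x y) = μq (Icc x y) := by
        rw [Measure.restrict_apply measurableSet_Icc, inter_eq_self_of_subset_left hsub2]
      have h2 : μq (Icc x y) = ENNReal.ofReal (q y - q x) := by
        have hle : μq (Icc x y) ≤ μq (Ioc x y) := by
          rw [← Ioc_insert_left (le_of_lt hy.1), insert_eq]
          calc μq ({x} ∪ Ioc x y) ≤ μq {x} + μq (Ioc x y) := measure_union_le _ _
            _ = μq (Ioc x y) := by rw [hatom x hxI, zero_add]
        have hge : μq (Ioc x y) ≤ μq (Icc x y) := measure_mono Ioc_subset_Icc_self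
        rw [le_antisymm hle hge]
        exact hμq x y hxI hyI (le_of_lt hy.1)
      rw [h1, h2, Real.volume_Icc, ENNReal.ofReal_div_of_pos (sub_pos.2 hy.1)]
    exact tendsto_nhds_unique ((Filter.tendsto_congr' hev).1 T1) T2
  -- measurability of the zero set
  set A := {x ∈ I | qp x = 0} with hA
  have hA_sub : A ⊆ I := fun x hx => hx.1
  have hA_meas : MeasurableSet A := by
    have hFmeas : ∀ k : ℕ, Measurable (Set.indicator I
        (fun x => (q (x + 1/((k:ℝ)+1)) - q x) / (1/((k:ℝ)+1)))) := by
      intro k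
      exact (((hq_meas.comp (measurable_id.add_const _)).sub hq_meas).div_const _).indicator
        hI_open.measurableSet
    have hTend : ∀ x, Tendsto (fun k : ℕ => Set.indicator I
        (fun x => (q (x + 1/((k:ℝ)+1)) - q x) / (1/((k:ℝ)+1))) x) atTop
        (𝓝 (Set.indicator I qp x)) := by
      intro x
      by_cases hx : x ∈ I
      · simp only [Set.indicator_of_mem hx]
        have hu : Tendsto (fun k : ℕ => 1/((k:ℝ)+1)) atTop (𝓝[>] (0:ℝ)) := by
          rw [tendsto_nhdsWithin_iff]
          exact ⟨tendsto_one_div_add_atTop_nhds_zero_nat,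
            Eventually.of_forall fun k => Set.mem_Ioi.2 (by positivity)⟩
        exact (hqp x hx).comp hu
      · simp [Set.indicator_of_notMem hx]
    have hqpI : Measurable (Set.indicator I qp) :=
      measurable_of_tendsto_metrizable hFmeas (tendsto_pi_nhds.2 hTend)
    have hAeq : A = I ∩ (Set.indicator I qp)⁻¹' {0} := by
      ext x
      simp only [hA, mem_setOf_eq, mem_inter_iff, mem_preimage, mem_singleton_iff]
      constructor
      · rintro ⟨h1, h2⟩; exact ⟨h1, by rw [Set.indicator_of_mem h1]; exact h2⟩
      · rintro ⟨h1, h2⟩; rw [Set.indicator_of_mem h1] at h2; exact ⟨h1, h2⟩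
    rw [hAeq]
    exact hI_open.measurableSet.inter (hqpI (measurableSet_singleton 0))
  -- countable rational cover of I
  set P : Set (ℚ × ℚ) := {p | ((p.1:ℝ)) ∈ I ∧ ((p.2:ℝ)) ∈ I ∧ ((p.1:ℝ)) < ((p.2:ℝ))} with hP
  have hcov : I ⊆ ⋃ p ∈ P, Ioo ((p.1:ℝ)) ((p.2:ℝ)) := by
    intro x hx
    obtain ⟨ε, εpos, hball⟩ := Metric.isOpen_iff.1 hI_open x hx
    obtain ⟨a, ha1, ha2⟩ := exists_rat_btwn (show x - ε < x by linarith)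
    obtain ⟨b, hb1, hb2⟩ := exists_rat_btwn (show x < x + ε by linarith)
    have haI : ((a:ℝ)) ∈ I := hball (by rw [Real.ball_eq_Ioo]; exact ⟨ha1, by linarith⟩)
    have hbI : ((b:ℝ)) ∈ I := hball (by rw [Real.ball_eq_Ioo]; exact ⟨by linarith, hb2⟩)
    exact mem_biUnion (show ((a,b) : ℚ × ℚ) ∈ P from ⟨haI, hbI, ha2.trans hb1⟩) ⟨ha2, hb1⟩
  constructor
  · -- null zero set implies absolute continuity
    intro hA0
    refine Measure.AbsolutelyContinuous.mk ?_
    intro s hs hμqs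
    rw [Measure.restrict_apply hs]
    have hz : ∀ p ∈ P, volume (s ∩ Ioo ((p.1:ℝ)) ((p.2:ℝ))) = 0 := by
      rintro ⟨a, b⟩ ⟨haI, hbI, hab⟩
      have hwd : volume.withDensity ((μq.restrict (Icc (a:ℝ) (b:ℝ))).rnDeriv volume) s = 0 := by
        refine le_antisymm ?_ zero_le
        calc volume.withDensity ((μq.restrict (Icc (a:ℝ) (b:ℝ))).rnDeriv volume) s
            ≤ (μq.restrict (Icc (a:ℝ) (b:ℝ))) s :=
              Measure.le_iff'.1 (Measure.withDensity_rnDeriv_le _ _) s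
          _ ≤ μq s := Measure.le_iff'.1 Measure.restrict_le_self s
          _ = 0 := hμqs
      have h3 : ∀ᵐ x ∂(volume : Measure ℝ), x ∈ s →
          (μq.restrict (Icc (a:ℝ) (b:ℝ))).rnDeriv volume x = 0 := by
        rw [withDensity_apply _ hs] at hwd
        exact (setLIntegral_eq_zero_iff hs (Measure.measurable_rnDeriv _ _)).1 hwd
      rw [measure_eq_zero_iff_ae_notMem]
      filter_upwards [h3, key a b haI hbI hab, measure_eq_zero_iff_ae_notMem.1 hA0]
        with x hx1 hx2 hxA hmem
      have hx3 : x ∈ Ioo ((a:ℝ)) ((b:ℝ)) := hmem.2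
      have hxI : x ∈ I := hIcc haI hbI (Ioo_subset_Icc_self hx3)
      have h0 : ENNReal.ofReal (qp x) = 0 := by rw [← hx2 hx3, hx1 hmem.1]
      exact hxA ⟨hxI, le_antisymm (ENNReal.ofReal_eq_zero.1 h0) (hqp_nonneg x hxI)⟩
    have hU : volume (⋃ p ∈ P, s ∩ Ioo ((p.1:ℝ)) ((p.2:ℝ))) = 0 :=
      (measure_biUnion_null_iff (Set.to_countable P)).2 hz
    refine le_antisymm (le_of_le_of_eq (measure_mono ?_) hU) zero_le
    rintro x ⟨hxs, hxI⟩
    obtain ⟨p, hp, hxp⟩ := mem_iUnion₂.1 (hcov hxI)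
    exact mem_iUnion₂.2 ⟨p, hp, hxs, hxp⟩
  · -- absolute continuity implies null zero set
    intro h
    have hz : ∀ p ∈ P, volume (A ∩ Ioo ((p.1:ℝ)) ((p.2:ℝ))) = 0 := by
      rintro ⟨a, b⟩ ⟨haI, hbI, hab⟩
      haveI : IsFiniteMeasure (μq.restrict (Icc (a:ℝ) (b:ℝ))) := by
        constructor
        rw [Measure.restrict_apply_univ]
        exact hfin _ _ haI hbI
      obtain ⟨S, hSm, hσS, hvS⟩ :=
        Measure.mutuallySingular_singularPart (μq.restrict (Icc (a:ℝ) (b:ℝ))) volume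
      set B := A ∩ Ioo ((a:ℝ)) ((b:ℝ)) ∩ S with hB
      have hBm : MeasurableSet B := (hA_meas.inter measurableSet_Ioo).inter hSm
      have hBI : B ⊆ I := fun x hx => hA_sub hx.1.1
      have hBIcc : B ⊆ Icc ((a:ℝ)) ((b:ℝ)) := fun x hx => Ioo_subset_Icc_self hx.1.2
      have hμqB : μq B = 0 := by
        have h1 : μq B = (μq.restrict (Icc (a:ℝ) (b:ℝ))) B := by
          rw [Measure.restrict_apply hBm, inter_eq_self_of_subset_left hBIcc]
        have hdec := (μq.restrict (Icc (a:ℝ) (b:ℝ))).haveLebesgueDecomposition_add volume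
        have h2 : (μq.restrict (Icc (a:ℝ) (b:ℝ))) B =
            (μq.restrict (Icc (a:ℝ) (b:ℝ))).singularPart volume B
              + volume.withDensity ((μq.restrict (Icc (a:ℝ) (b:ℝ))).rnDeriv volume) B := by
          conv_lhs => rw [hdec]
          simp [Measure.add_apply]
        have h3 : (μq.restrict (Icc (a:ℝ) (b:ℝ))).singularPart volume B = 0 :=
          le_antisymm (hσS ▸ measure_mono (fun x hx => hx.2)) zero_le
        have h4 : volume.withDensity ((μq.restrict (Icc (a:ℝ) (b:ℝ))).rnDeriv volume) B = 0 := by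
          rw [withDensity_apply _ hBm]
          have hae : ∀ᵐ x ∂(volume.restrict B),
              (μq.restrict (Icc (a:ℝ) (b:ℝ))).rnDeriv volume x = 0 := by
            filter_upwards [ae_restrict_of_ae (key _ _ haI hbI hab), ae_restrict_mem hBm]
              with x hx1 hx2
            rw [hx1 hx2.1.2, hx2.1.1.2]
            simp
          rw [lintegral_congr_ae hae, lintegral_zero]
        rw [h1, h2, h3, h4, add_zero]
      have hvol : volume B = 0 := by
        have := h hμqB
        rwa [Measure.restrict_apply hBm, inter_eq_self_of_subset_left hBI] at this
      have hle : volume (A ∩ Ioo ((a:ℝ)) ((b:ℝ))) ≤ volume B + volume Sᶜ := by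
        refine le_trans (measure_mono ?_) (measure_union_le _ _)
        intro x hx
        by_cases hxS : x ∈ S
        · exact Or.inl ⟨hx, hxS⟩
        · exact Or.inr hxS
      rw [hvol, hvS, add_zero] at hle
      exact le_antisymm hle zero_le
    have hU : volume (⋃ p ∈ P, A ∩ Ioo ((p.1:ℝ)) ((p.2:ℝ))) = 0 :=
      (measure_biUnion_null_iff (Set.to_countable P)).2 hz
    refine le_antisymm (le_of_le_of_eq (measure_mono ?_) hU) zero_le
    intro x hx
    obtain ⟨p, hp, hxp⟩ := mem_iUnion₂.1 (hcov (hA_sub hx))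
    exact mem_iUnion₂.2 ⟨p, hp, hx, hxp⟩
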